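/- arXiv:1410.5040 — 2 statements merged into one kernel-verified Lean document; each statement's English description precedes it below -/
import Mathlib

section
/- Let σ > 0, d ≥ 1 an integer, and a, b, c reals with a, b > 0 and δ·a² > c² + b² for some 1/4 < δ ≤ 1. Set ā = √(c²+b²) and b̄ = a·b/ā. If a/(2σ) ≤ r(√(2π)/(2d)), then [1/(d+1) + (d/(d+1))φ_σ(a)]·[1/(d+1) + (d/(d+1))φ_σ(b)] ≥ [1/(d+1) + (d/(d+1))φ_σ(ā)]·[1/(d+1) + (d/(d+1))φ_σ(b̄)], with equality if and only if c = 0. -/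
noncomputable def phi (σ ζ : ℝ) : ℝ :=
  (2 / Real.sqrt (2 * Real.pi)) * ∫ t in (0:ℝ)..(ζ / (2 * σ)), Real.exp (-t ^ 2 / 2)

noncomputable def f (ζ α : ℝ) : ℝ :=
  (1 - ζ ^ 2) * (α + ∫ t in (0:ℝ)..ζ, Real.exp (-t ^ 2 / 2)) - ζ * Real.exp (-ζ ^ 2 / 2)

open Real Set

noncomputable def FF (x : ℝ) : ℝ := ∫ t in (0:ℝ)..x, Real.exp (-t ^ 2 / 2)

lemma cont_gauss : Continuous fun t : ℝ => Real.exp (-t ^ 2 / 2) := by fun_prop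

lemma FF_hasDerivAt (x : ℝ) : HasDerivAt FF (Real.exp (-x ^ 2 / 2)) x :=
  intervalIntegral.integral_hasDerivAt_right (cont_gauss.intervalIntegrable _ _)
    (cont_gauss.stronglyMeasurableAtFilter _ _) cont_gauss.continuousAt

lemma FF_nonneg {x : ℝ} (hx : 0 ≤ x) : 0 ≤ FF x := by
  apply intervalIntegral.integral_nonneg hx
  intro t _; positivity

lemma gauss_hasDerivAt (x : ℝ) :
    HasDerivAt (fun y : ℝ => Real.exp (-y ^ 2 / 2)) (-x * Real.exp (-x ^ 2 / 2)) x := by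
  have h1 : HasDerivAt (fun y : ℝ => -y ^ 2 / 2) (-x) x := by
    have := ((hasDerivAt_pow 2 x).neg).div_const 2
    exact this.congr_deriv (by push_cast; ring)
  have := (Real.hasDerivAt_exp (-x ^ 2 / 2)).comp x h1
  exact this.congr_deriv (by ring)

lemma f_eq (ζ α : ℝ) : f ζ α = (1 - ζ ^ 2) * (α + FF ζ) - ζ * Real.exp (-ζ ^ 2 / 2) := rfl

lemma f_hasDerivAt (α ζ : ℝ) :
    HasDerivAt (fun z => f z α) (-2 * ζ * (α + FF ζ)) ζ := by
  have h1 : HasDerivAt (fun z : ℝ => 1 - z ^ 2) (-(2 * ζ)) ζ := by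
    have := (hasDerivAt_pow 2 ζ).const_sub 1
    exact this.congr_deriv (by push_cast; ring)
  have h2 : HasDerivAt (fun z => α + FF z) (Real.exp (-ζ ^ 2 / 2)) ζ :=
    (FF_hasDerivAt ζ).const_add α
  have h3 : HasDerivAt (fun z : ℝ => z * Real.exp (-z ^ 2 / 2))
      (Real.exp (-ζ ^ 2 / 2) + ζ * (-ζ * Real.exp (-ζ ^ 2 / 2))) ζ := by
    exact ((hasDerivAt_id' ζ).mul (gauss_hasDerivAt ζ)).congr_deriv (by ring)
  have := ((h1.mul h2).sub h3)
  have heq : ∀ z : ℝ, (1 - z ^ 2) * (α + FF z) - z * Real.exp (-z ^ 2 / 2) = f z α :=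
    fun z => (f_eq z α).symm
  show HasDerivAt (fun z => (1 - z ^ 2) * (α + FF z) - z * Real.exp (-z ^ 2 / 2)) _ ζ
  exact this.congr_deriv (by ring)

/-- f is strictly positive on `[0, rα)` given `f rα α = 0`. -/
lemma f_pos_of_lt {α rα : ℝ} (hα : 0 < α) (hr0 : 0 ≤ rα) (hrz : f rα α = 0)
    {u : ℝ} (hu0 : 0 ≤ u) (hu : u < rα) : 0 < f u α := by
  have hanti : StrictAntiOn (fun z => f z α) (Set.Ici 0) := by
    apply strictAntiOn_of_deriv_neg (convex_Ici 0)
    · exact fun z _ => (f_hasDerivAt α z).continuousAt.continuousWithinAt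
    · intro z hz
      rw [interior_Ici] at hz
      have hz' : (0:ℝ) < z := hz
      rw [(f_hasDerivAt α z).deriv]
      have hFz : 0 ≤ FF z := FF_nonneg hz.le
      nlinarith
  have := hanti hu0 (le_trans hu0 hu.le) hu
  simpa [hrz] using this

lemma key_convex (σ : ℝ) (hσ : 0 < σ) (d : ℕ) (hd : 1 ≤ d) (rα : ℝ)
    (hrz : f rα (Real.sqrt (2 * Real.pi) / (2 * d)) = 0) (a : ℝ) (ha : 0 < a)
    (hra : a / (2 * σ) ≤ rα) :
    StrictConvexOn ℝ (Set.Iic (Real.log a))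
      (fun x => Real.log (1 / ((d:ℝ) + 1) + (d:ℝ) / ((d:ℝ) + 1) * phi σ (Real.exp x))) := by
  have hd0 : (0:ℝ) < d := by exact_mod_cast hd
  have hsπ : (0:ℝ) < Real.sqrt (2 * Real.pi) := Real.sqrt_pos.mpr (by positivity)
  set α : ℝ := Real.sqrt (2 * Real.pi) / (2 * d) with hαdef
  have hα : 0 < α := by positivity
  set K : ℝ := (d:ℝ) / ((d:ℝ) + 1) * (2 / Real.sqrt (2 * Real.pi)) with hKdef
  have hK : 0 < K := by positivity
  have hKα : K * α = 1 / ((d:ℝ) + 1) := by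
    rw [hKdef, hαdef]; field_simp
  set h : ℝ → ℝ := fun x => K * (α + FF (Real.exp x / (2 * σ))) with hdef
  have hfun : (fun x => Real.log (1 / ((d:ℝ) + 1) + (d:ℝ) / ((d:ℝ) + 1) * phi σ (Real.exp x)))
      = fun x => Real.log (h x) := by
    funext x
    have : 1 / ((d:ℝ) + 1) + (d:ℝ) / ((d:ℝ) + 1) * phi σ (Real.exp x) = h x := by
      rw [hdef]
      have hφ : phi σ (Real.exp x) = (2 / Real.sqrt (2 * Real.pi)) * FF (Real.exp x / (2 * σ)) := rfl
      rw [hφ]; simp only [mul_add, hKα]; rw [← hKα]; ring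
    rw [this]
  rw [hfun]
  -- positivity of h
  have hpos : ∀ x : ℝ, 0 < h x := by
    intro x
    have hu : 0 ≤ Real.exp x / (2 * σ) := by positivity
    have := FF_nonneg hu
    rw [hdef]
    have : 0 < α + FF (Real.exp x / (2 * σ)) := by linarith
    positivity
  -- derivative machinery
  have hu' : ∀ x : ℝ, HasDerivAt (fun y => Real.exp y / (2 * σ)) (Real.exp x / (2 * σ)) x :=
    fun x => (Real.hasDerivAt_exp x).div_const (2 * σ)
  set u : ℝ → ℝ := fun x => Real.exp x / (2 * σ) with hudef
  have hFFu : ∀ x : ℝ, HasDerivAt (fun y => FF (u y)) (Real.exp (-(u x) ^ 2 / 2) * u x) x :=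
    fun x => (FF_hasDerivAt (u x)).comp x (hu' x)
  have hh' : ∀ x : ℝ, HasDerivAt h (K * (Real.exp (-(u x) ^ 2 / 2) * u x)) x := by
    intro x
    exact ((hFFu x).const_add α).const_mul K
  have hG' : ∀ x : ℝ, HasDerivAt (fun y => Real.log (h y))
      (K * (Real.exp (-(u x) ^ 2 / 2) * u x) / h x) x :=
    fun x => (hh' x).log (hpos x).ne'
  have hderivG : deriv (fun y => Real.log (h y))
      = fun x => K * (Real.exp (-(u x) ^ 2 / 2) * u x) / h x :=
    funext fun x => (hG' x).deriv
  -- second derivative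
  have hE : ∀ x : ℝ, HasDerivAt (fun y => Real.exp (-(u y) ^ 2 / 2))
      (-(u x) * Real.exp (-(u x) ^ 2 / 2) * u x) x :=
    fun x => (gauss_hasDerivAt (u x)).comp x (hu' x)
  have hN : ∀ x : ℝ, HasDerivAt (fun y => K * (Real.exp (-(u y) ^ 2 / 2) * u y))
      (K * (Real.exp (-(u x) ^ 2 / 2) * u x * (1 - (u x) ^ 2))) x := by
    intro x
    have := ((hE x).mul (hu' x)).const_mul K
    exact this.congr_deriv (by ring)
  have hΨ : ∀ x : ℝ, HasDerivAt (fun y => K * (Real.exp (-(u y) ^ 2 / 2) * u y) / h y)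
      ((K * (Real.exp (-(u x) ^ 2 / 2) * u x * (1 - (u x) ^ 2)) * h x
        - K * (Real.exp (-(u x) ^ 2 / 2) * u x) * (K * (Real.exp (-(u x) ^ 2 / 2) * u x)))
        / (h x) ^ 2) x :=
    fun x => (hN x).div (hh' x) (hpos x).ne'
  apply strictConvexOn_of_deriv2_pos (convex_Iic _)
  · exact fun x _ => (hG' x).continuousAt.continuousWithinAt
  · intro x hx
    rw [interior_Iic] at hx
    have hux : u x < rα := by
      have hexpa : Real.exp x < a := by
        have := Real.exp_lt_exp.mpr hx
        rwa [Real.exp_log ha] at this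
      calc u x = Real.exp x / (2 * σ) := rfl
        _ < a / (2 * σ) := by
            have h2σ : (0:ℝ) < 2 * σ := by positivity
            exact div_lt_div_of_pos_right hexpa h2σ

        _ ≤ rα := hra
    have hu0 : 0 < u x := by
      show 0 < Real.exp x / (2 * σ); positivity
    have hfu : 0 < f (u x) α :=
      f_pos_of_lt hα (le_trans hu0.le hux.le) hrz hu0.le hux
    have hiter : deriv^[2] (fun y => Real.log (h y))
        = deriv (deriv (fun y => Real.log (h y))) := rfl
    rw [hiter, hderivG, (hΨ x).deriv]
    have hnum : K * (Real.exp (-(u x) ^ 2 / 2) * u x * (1 - (u x) ^ 2)) * h x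
        - K * (Real.exp (-(u x) ^ 2 / 2) * u x) * (K * (Real.exp (-(u x) ^ 2 / 2) * u x))
        = K ^ 2 * Real.exp (-(u x) ^ 2 / 2) * u x * f (u x) α := by
      have hhx : h x = K * (α + FF (u x)) := rfl
      rw [hhx, f_eq]; ring
    rw [hnum]
    have hE0 : 0 < Real.exp (-(u x) ^ 2 / 2) := Real.exp_pos _
    have := hpos x
    positivity

theorem stmt14 (σ : ℝ) (hσ : 0 < σ) (d : ℕ) (hd : 1 ≤ d) (a b c δ : ℝ)
    (ha : 0 < a) (hb : 0 < b) (hδ1 : 1 / 4 < δ) (hδ2 : δ ≤ 1)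
    (hcond : c ^ 2 + b ^ 2 < δ * a ^ 2)
    (rα : ℝ) (hr0 : 0 ≤ rα) (hrz : f rα (Real.sqrt (2 * Real.pi) / (2 * d)) = 0)
    (hcondr : a / (2 * σ) ≤ rα) :
    (1 / ((d : ℝ) + 1) + (d : ℝ) / ((d : ℝ) + 1) * phi σ a) *
        (1 / ((d : ℝ) + 1) + (d : ℝ) / ((d : ℝ) + 1) * phi σ b) ≥
      (1 / ((d : ℝ) + 1) + (d : ℝ) / ((d : ℝ) + 1) * phi σ (Real.sqrt (c ^ 2 + b ^ 2))) *
        (1 / ((d : ℝ) + 1) +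
          (d : ℝ) / ((d : ℝ) + 1) * phi σ (a * b / Real.sqrt (c ^ 2 + b ^ 2))) ∧
    ((1 / ((d : ℝ) + 1) + (d : ℝ) / ((d : ℝ) + 1) * phi σ a) *
        (1 / ((d : ℝ) + 1) + (d : ℝ) / ((d : ℝ) + 1) * phi σ b) =
      (1 / ((d : ℝ) + 1) + (d : ℝ) / ((d : ℝ) + 1) * phi σ (Real.sqrt (c ^ 2 + b ^ 2))) *
        (1 / ((d : ℝ) + 1) +
          (d : ℝ) / ((d : ℝ) + 1) * phi σ (a * b / Real.sqrt (c ^ 2 + b ^ 2))) ↔ c = 0) := by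
  have hd0 : (0:ℝ) < d := by exact_mod_cast hd
  have hsπ : (0:ℝ) < Real.sqrt (2 * Real.pi) := Real.sqrt_pos.mpr (by positivity)
  have hgpos : ∀ ζ : ℝ, 0 < ζ →
      0 < 1 / ((d:ℝ) + 1) + (d:ℝ) / ((d:ℝ) + 1) * phi σ ζ := by
    intro ζ hζ
    have hphi : 0 ≤ phi σ ζ := by
      show 0 ≤ (2 / Real.sqrt (2 * Real.pi)) * FF (ζ / (2 * σ))
      exact mul_nonneg (by positivity) (FF_nonneg (by positivity))
    have h1 : (0:ℝ) < 1 / ((d:ℝ) + 1) := by positivity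
    have h2 : 0 ≤ (d:ℝ) / ((d:ℝ) + 1) * phi σ ζ := by positivity
    linarith
  rcases eq_or_ne c 0 with hc | hc
  · subst hc
    have h1 : Real.sqrt ((0:ℝ) ^ 2 + b ^ 2) = b := by
      rw [show (0:ℝ) ^ 2 + b ^ 2 = b ^ 2 by ring, Real.sqrt_sq hb.le]
    rw [h1, mul_div_assoc, div_self hb.ne', mul_one]
    exact ⟨ge_of_eq (mul_comm _ _), by simp [mul_comm]⟩
  · have hc2 : 0 < c ^ 2 := by positivity
    have hba : b < a := by nlinarith
    set A := Real.sqrt (c ^ 2 + b ^ 2) with hA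
    have hApos : 0 < A := Real.sqrt_pos.mpr (by positivity)
    have hbA : b < A := by
      rw [hA]
      calc b = Real.sqrt (b ^ 2) := (Real.sqrt_sq hb.le).symm
        _ < Real.sqrt (c ^ 2 + b ^ 2) := Real.sqrt_lt_sqrt (sq_nonneg b) (by nlinarith)
    have hAa : A < a := by
      rw [hA]
      calc Real.sqrt (c ^ 2 + b ^ 2) < Real.sqrt (a ^ 2) :=
            Real.sqrt_lt_sqrt (by positivity) (by nlinarith)
        _ = a := Real.sqrt_sq ha.le
    set B := a * b / A with hB
    have hBpos : 0 < B := by positivity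
    have hSC := key_convex σ hσ d hd rα hrz a ha hcondr
    set G : ℝ → ℝ :=
      fun x => Real.log (1 / ((d:ℝ) + 1) + (d:ℝ) / ((d:ℝ) + 1) * phi σ (Real.exp x)) with hGdef
    have hGlog : ∀ ζ : ℝ, 0 < ζ → G (Real.log ζ)
        = Real.log (1 / ((d:ℝ) + 1) + (d:ℝ) / ((d:ℝ) + 1) * phi σ ζ) := by
      intro ζ hζ
      rw [hGdef]
      simp [Real.exp_log hζ]
    set p := Real.log a with hp
    set q := Real.log b with hq
    set x' := Real.log A with hx'
    have hqx : q < x' := Real.log_lt_log hb hbA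
    have hxp : x' < p := Real.log_lt_log hApos hAa
    have hqp : q < p := Real.log_lt_log hb hba
    have hy' : Real.log B = p + q - x' := by
      rw [hB, Real.log_div (by positivity) hApos.ne', Real.log_mul ha.ne' hb.ne']
    set θ := (x' - q) / (p - q) with hθ
    have hpq : (0:ℝ) < p - q := by linarith
    have hθ0 : 0 < θ := div_pos (by linarith) hpq
    have hθ1 : 0 < 1 - θ := by
      rw [hθ, sub_pos, div_lt_one hpq]; linarith
    have hcomb1 : θ * p + (1 - θ) * q = x' := by
      rw [hθ]; field_simp; ring
    have hcomb2 : (1 - θ) * p + θ * q = p + q - x' := by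
      rw [hθ]; field_simp; ring
    have hmemp : p ∈ Set.Iic p := Set.mem_Iic.mpr le_rfl
    have hmemq : q ∈ Set.Iic p := Set.mem_Iic.mpr hqp.le
    have hne : p ≠ q := ne_of_gt hqp
    have h1 := hSC.2 hmemp hmemq hne hθ0 hθ1 (by ring)
    have h2 := hSC.2 hmemp hmemq hne hθ1 hθ0 (by ring)
    simp only [smul_eq_mul] at h1 h2
    rw [hcomb1] at h1
    rw [hcomb2] at h2
    have hsum : G x' + G (p + q - x') < G p + G q := by linarith
    rw [← hy', hp, hq, hx'] at hsum
    rw [hGlog a ha, hGlog b hb, hGlog A hApos, hGlog B hBpos] at hsum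
    have hga := hgpos a ha
    have hgb := hgpos b hb
    have hgA := hgpos A hApos
    have hgB := hgpos B hBpos
    rw [← Real.log_mul hgA.ne' hgB.ne', ← Real.log_mul hga.ne' hgb.ne'] at hsum
    have hlt := (Real.log_lt_log_iff (by positivity) (by positivity)).mp hsum
    exact ⟨le_of_lt hlt, ⟨fun heq => absurd heq.symm (ne_of_lt hlt), fun hc0 => absurd hc0 hc⟩⟩
end

section
/- Let σ > 0, integer d ≥ 1, and positive reals r_11,…,r_nn with max_i r_ii ≤ 2σ·r(√(2π)/(2d)). Let γ = (∏_{i=1}^n r_ii)^{1/n}. Then ∏_{i=1}^n [1/(d+1) + (d/(d+1))·φ_σ(r_ii)] ≥ [1/(d+1) + (d/(d+1))·φ_σ(γ)]^n, with equality if and only if r_11 = ⋯ = r_nn = γ. -/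
noncomputable def gg (α ζ : ℝ) : ℝ := α + ∫ t in (0:ℝ)..ζ, Real.exp (-t ^ 2 / 2)

lemma contE : Continuous (fun t : ℝ => Real.exp (-t ^ 2 / 2)) := by continuity

lemma hasDerivAt_gg (α ζ : ℝ) : HasDerivAt (gg α) (Real.exp (-ζ ^ 2 / 2)) ζ := by
  have h := intervalIntegral.integral_hasDerivAt_right
    (contE.intervalIntegrable 0 ζ) (contE.stronglyMeasurableAtFilter _ _) contE.continuousAt
  exact h.const_add α

lemma gg_pos {α : ℝ} (hα : 0 < α) {ζ : ℝ} (hζ : 0 ≤ ζ) : 0 < gg α ζ := by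
  have : 0 ≤ ∫ t in (0:ℝ)..ζ, Real.exp (-t ^ 2 / 2) :=
    intervalIntegral.integral_nonneg hζ (fun t _ => (Real.exp_pos _).le)
  unfold gg; linarith

lemma hasDerivAt_p (x : ℝ) :
    HasDerivAt (fun x : ℝ => Real.exp (-x ^ 2 / 2)) (Real.exp (-x ^ 2 / 2) * (-x)) x := by
  have h1 : HasDerivAt (fun x : ℝ => -x ^ 2 / 2) (-x) x := by
    have := ((hasDerivAt_pow 2 x).neg).div_const 2
    simpa using this.congr_deriv (by ring)
  exact h1.exp

lemma hasDerivAt_f (α ζ : ℝ) : HasDerivAt (fun ζ => f ζ α) (-2 * ζ * gg α ζ) ζ := by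
  have h2 : HasDerivAt (fun ζ : ℝ => 1 - ζ ^ 2) (-(2 * ζ)) ζ := by
    have := ((hasDerivAt_pow 2 ζ)).const_sub 1
    simpa using this.congr_deriv (by ring)
  have h := (h2.mul (hasDerivAt_gg α ζ)).sub ((hasDerivAt_id ζ).mul (hasDerivAt_p ζ))
  have e : (fun ζ => f ζ α) = fun ζ => (1 - ζ ^ 2) * gg α ζ - id ζ * Real.exp (-ζ ^ 2 / 2) := by
    funext x; simp [f, gg]
  rw [e]
  exact h.congr_deriv (by simp [gg]; ring)

lemma f_anti (α : ℝ) (hα : 0 < α) : StrictAntiOn (fun ζ => f ζ α) (Set.Ici 0) := by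
  apply strictAntiOn_of_deriv_neg (convex_Ici 0)
  · exact (fun x _ => ((hasDerivAt_f α x).differentiableAt.continuousAt).continuousWithinAt)
  · intro x hx
    rw [interior_Ici] at hx
    rw [(hasDerivAt_f α x).deriv]
    have := gg_pos hα (le_of_lt hx)
    have hx' : (0:ℝ) < x := hx
    nlinarith

lemma f_pos {α R : ℝ} (hα : 0 < α) (hR : 0 ≤ R) (hfR : f R α = 0) {ζ : ℝ}
    (h0 : 0 < ζ) (hζ : ζ < R) : 0 < f ζ α := by
  have := f_anti α hα (Set.mem_Ici.2 h0.le) (Set.mem_Ici.2 hR) hζ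
  simpa [hfR] using this

lemma rα_pos {α R : ℝ} (hα : 0 < α) (hR : 0 ≤ R) (hfR : f R α = 0) : 0 < R := by
  rcases hR.lt_or_eq with h | h
  · exact h
  · exfalso
    have : f 0 α = α := by simp [f]
    rw [← h] at hfR; rw [hfR] at this; exact hα.ne' this.symm

lemma hasDerivAt_h {α : ℝ} (hα : 0 < α) (u : ℝ) :
    HasDerivAt (fun u => Real.log (gg α (Real.exp u)))
      (Real.exp u * Real.exp (-(Real.exp u) ^ 2 / 2) / gg α (Real.exp u)) u := by
  have hg := gg_pos hα (Real.exp_pos u).le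
  have H1 : HasDerivAt (fun u => gg α (Real.exp u))
      (Real.exp (-(Real.exp u) ^ 2 / 2) * Real.exp u) u :=
    (hasDerivAt_gg α (Real.exp u)).comp u (Real.hasDerivAt_exp u)
  exact (H1.log hg.ne').congr_deriv (by ring)

lemma strictconv {α R : ℝ} (hα : 0 < α) (hR0 : 0 ≤ R) (hfR : f R α = 0) :
    StrictConvexOn ℝ (Set.Iic (Real.log R)) (fun u => Real.log (gg α (Real.exp u))) := by
  have hR : 0 < R := rα_pos hα hR0 hfR
  set h : ℝ → ℝ := fun u => Real.log (gg α (Real.exp u)) with hh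
  have hderiv : deriv h = fun u =>
      Real.exp u * Real.exp (-(Real.exp u) ^ 2 / 2) / gg α (Real.exp u) :=
    funext fun u => (hasDerivAt_h hα u).deriv
  apply strictConvexOn_of_deriv2_pos (convex_Iic _)
  · exact fun u _ => ((hasDerivAt_h hα u).differentiableAt.continuousAt).continuousWithinAt
  · intro x hx
    rw [interior_Iic] at hx
    set E := Real.exp x with hE
    have hEpos : 0 < E := Real.exp_pos x
    have hER : E < R := by
      calc E < Real.exp (Real.log R) := Real.exp_lt_exp.2 hx
        _ = R := Real.exp_log hR
    have hg := gg_pos hα hEpos.le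
    have hpE : 0 < Real.exp (-E ^ 2 / 2) := Real.exp_pos _
    -- second derivative
    have hN : HasDerivAt (fun u => Real.exp u * Real.exp (-(Real.exp u) ^ 2 / 2))
        (E * Real.exp (-E ^ 2 / 2) + E * (Real.exp (-E ^ 2 / 2) * (-E) * E)) x := by
      have hp2 : HasDerivAt (fun u => Real.exp (-(Real.exp u) ^ 2 / 2))
          (Real.exp (-E ^ 2 / 2) * (-E) * E) x := by
        have := (hasDerivAt_p E).comp x (Real.hasDerivAt_exp x); exact this
      exact ((Real.hasDerivAt_exp x).mul hp2).congr_deriv (by ring)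
    have hD : HasDerivAt (fun u => gg α (Real.exp u)) (Real.exp (-E ^ 2 / 2) * E) x := by
      have := (hasDerivAt_gg α E).comp x (Real.hasDerivAt_exp x); exact this
    have hφ := hN.div hD hg.ne'
    have h2 : deriv (deriv h) x = ((E * Real.exp (-E ^ 2 / 2) +
        E * (Real.exp (-E ^ 2 / 2) * (-E) * E)) * gg α E -
        E * Real.exp (-E ^ 2 / 2) * (Real.exp (-E ^ 2 / 2) * E)) / gg α E ^ 2 := by
      rw [hderiv]
      exact hφ.deriv
    show 0 < deriv^[2] h x
    have : deriv^[2] h x = deriv (deriv h) x := rfl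
    rw [this, h2]
    have hfpos : 0 < f E α := f_pos hα hR0 hfR hEpos hER
    have key : (E * Real.exp (-E ^ 2 / 2) + E * (Real.exp (-E ^ 2 / 2) * (-E) * E)) * gg α E -
        E * Real.exp (-E ^ 2 / 2) * (Real.exp (-E ^ 2 / 2) * E)
        = E * Real.exp (-E ^ 2 / 2) * f E α := by
      simp only [f, gg]; ring
    rw [key]
    positivity

theorem stmt17 (n : ℕ) (hn : 0 < n) (σ : ℝ) (hσ : 0 < σ) (d : ℕ) (hd : 1 ≤ d)
    (r : Fin n → ℝ) (hr : ∀ i, 0 < r i)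
    (rα : ℝ) (hr0 : 0 ≤ rα) (hrz : f rα (Real.sqrt (2 * Real.pi) / (2 * d)) = 0)
    (hmax : ∀ i, r i ≤ 2 * σ * rα) :
    ∏ i, (1 / ((d : ℝ) + 1) + (d : ℝ) / ((d : ℝ) + 1) * phi σ (r i)) ≥
      (1 / ((d : ℝ) + 1) +
        (d : ℝ) / ((d : ℝ) + 1) * phi σ ((∏ i, r i) ^ ((1 : ℝ) / n))) ^ n ∧
    ((∏ i, (1 / ((d : ℝ) + 1) + (d : ℝ) / ((d : ℝ) + 1) * phi σ (r i)) =
        (1 / ((d : ℝ) + 1) +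
          (d : ℝ) / ((d : ℝ) + 1) * phi σ ((∏ i, r i) ^ ((1 : ℝ) / n))) ^ n) ↔
      ∀ i, r i = (∏ i, r i) ^ ((1 : ℝ) / n)) := by
  have hπ : 0 < Real.sqrt (2 * Real.pi) := Real.sqrt_pos.2 (by positivity)
  have hd0 : (0:ℝ) < d := by exact_mod_cast hd
  have hn0 : (0:ℝ) < n := by exact_mod_cast hn
  set α : ℝ := Real.sqrt (2 * Real.pi) / (2 * d) with hαdef
  have hα : 0 < α := by positivity
  have hR : 0 < rα := rα_pos hα hr0 hrz
  set C : ℝ := 2 * d / (((d:ℝ) + 1) * Real.sqrt (2 * Real.pi)) with hCdef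
  have hC : 0 < C := by positivity
  have m_eq : ∀ x : ℝ, 1 / ((d:ℝ) + 1) + (d:ℝ) / ((d:ℝ) + 1) * phi σ x
      = C * gg α (x / (2 * σ)) := by
    intro x
    simp only [phi, gg, hCdef, hαdef]
    have h1 : ((d:ℝ) + 1) ≠ 0 := by positivity
    field_simp
  set s : Fin n → ℝ := fun i => r i / (2 * σ) with hsdef
  have hs : ∀ i, 0 < s i := fun i => div_pos (hr i) (by positivity)
  have hsR : ∀ i, s i ≤ rα := by
    intro i
    rw [hsdef]
    rw [div_le_iff₀ (by positivity)]
    nlinarith [hmax i]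
  set u : Fin n → ℝ := fun i => Real.log (s i) with hudef
  set w : Fin n → ℝ := fun _ => 1 / (n:ℝ) with hwdef
  have hw1 : ∑ i : Fin n, w i = 1 := by
    simp [hwdef]
    field_simp
  set h : ℝ → ℝ := fun v => Real.log (gg α (Real.exp v)) with hhdef
  set ub : ℝ := ∑ i, w i • u i with hubdef
  have humem : ∀ i : Fin n, u i ∈ Set.Iic (Real.log rα) := by
    intro i
    exact Real.log_le_log (hs i) (hsR i)
  have hconv := strictconv hα hr0 hrz
  -- relations
  have heu : ∀ i, Real.exp (u i) = s i := fun i => Real.exp_log (hs i)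
  have hgs : ∀ i, gg α (s i) = Real.exp (h (u i)) := by
    intro i
    rw [hhdef]
    simp only [heu i]
    rw [Real.exp_log (gg_pos hα (hs i).le)]
  have hgG : gg α (Real.exp ub) = Real.exp (h ub) := by
    rw [hhdef]
    exact (Real.exp_log (gg_pos hα (Real.exp_pos ub).le)).symm
  have hS : 0 < ∏ i, s i := Finset.prod_pos (fun i _ => hs i)
  have hub_eq : ub = Real.log (∏ i, s i) * (1 / (n:ℝ)) := by
    rw [hubdef, Real.log_prod (fun i _ => (hs i).ne')]
    rw [Finset.sum_mul]
    apply Finset.sum_congr rfl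
    intro i _
    simp [hwdef, hudef, smul_eq_mul, mul_comm]
  have hG : Real.exp ub = (∏ i, s i) ^ ((1:ℝ)/n) := by
    rw [Real.rpow_def_of_pos hS, hub_eq]
  have hP : ∏ i, r i = (2*σ)^n * ∏ i, s i := by
    have : ∏ i, r i = ∏ i, (2 * σ * s i) := by
      apply Finset.prod_congr rfl
      intro i _
      rw [hsdef]
      field_simp
    rw [this, Finset.prod_mul_distrib, Finset.prod_const, Finset.card_univ, Fintype.card_fin]
  have hγ : (∏ i, r i) ^ ((1:ℝ)/n) = 2 * σ * Real.exp ub := by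
    rw [hP, Real.mul_rpow (by positivity) hS.le, hG,
      ← Real.rpow_natCast (2*σ) n, ← Real.rpow_mul (by positivity)]
    rw [mul_one_div_cancel (by exact_mod_cast hn.ne' : (n:ℝ) ≠ 0), Real.rpow_one]
  have hγdiv : ((∏ i, r i) ^ ((1:ℝ)/n)) / (2 * σ) = Real.exp ub := by
    rw [hγ]; field_simp
  -- rewrite two sides
  have LHS_eq : ∏ i, (1 / ((d:ℝ) + 1) + (d:ℝ) / ((d:ℝ) + 1) * phi σ (r i))
      = C ^ n * Real.exp (∑ i, h (u i)) := by
    have : ∏ i, (1 / ((d:ℝ) + 1) + (d:ℝ) / ((d:ℝ) + 1) * phi σ (r i))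
        = ∏ i, (C * Real.exp (h (u i))) := by
      apply Finset.prod_congr rfl
      intro i _
      rw [m_eq (r i), hgs i]
    rw [this, Finset.prod_mul_distrib, Finset.prod_const, Finset.card_univ, Fintype.card_fin,
      Real.exp_sum]
  have RHS_eq : (1 / ((d:ℝ) + 1) + (d:ℝ) / ((d:ℝ) + 1) * phi σ ((∏ i, r i) ^ ((1:ℝ)/n))) ^ n
      = C ^ n * Real.exp ((n:ℝ) * h ub) := by
    rw [m_eq, hγdiv, hgG, mul_pow, ← Real.exp_nat_mul]
  -- Jensen
  have jensen := hconv.convexOn.map_sum_le (t := Finset.univ) (w := w) (p := u)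
    (fun i _ => by positivity) hw1 (fun i _ => humem i)
  have hsum_w : ∑ i, w i • h (u i) = (1/(n:ℝ)) * ∑ i, h (u i) := by
    rw [Finset.mul_sum]
    apply Finset.sum_congr rfl
    intro i _
    simp [hwdef, smul_eq_mul]
  have jensen' : (n:ℝ) * h ub ≤ ∑ i, h (u i) := by
    have := jensen
    rw [hsum_w, ← hubdef] at this
    have h2 : (n:ℝ) * h ub ≤ (n:ℝ) * ((1/(n:ℝ)) * ∑ i, h (u i)) := by
      exact mul_le_mul_of_nonneg_left this hn0.le
    rw [← mul_assoc, mul_one_div_cancel hn0.ne', one_mul] at h2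
    exact h2
  constructor
  · rw [ge_iff_le, LHS_eq, RHS_eq]
    exact mul_le_mul_of_nonneg_left (Real.exp_le_exp.2 jensen') (by positivity)
  · constructor
    · intro heq
      rw [LHS_eq, RHS_eq] at heq
      have hsum : ∑ i, h (u i) = (n:ℝ) * h ub :=
        Real.exp_injective (mul_left_cancel₀ (by positivity : C ^ n ≠ 0) heq)
      have heqj : h (∑ i, w i • u i) = ∑ i, w i • h (u i) := by
        rw [hsum_w, hsum, ← hubdef, ← mul_assoc, one_div_mul_cancel hn0.ne', one_mul]
      have hall := (hconv.map_sum_eq_iff (fun i _ => by positivity) hw1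
        (fun i _ => humem i)).1 heqj
      intro i
      have hui : u i = ub := by
        have := hall i (Finset.mem_univ i)
        rw [← hubdef] at this
        exact this
      have : s i = Real.exp ub := by rw [← heu i, hui]
      rw [hγ, ← this, hsdef]
      field_simp
    · intro hall
      have : ∀ i : Fin n, (1 / ((d:ℝ) + 1) + (d:ℝ) / ((d:ℝ) + 1) * phi σ (r i))
          = (1 / ((d:ℝ) + 1) + (d:ℝ) / ((d:ℝ) + 1) * phi σ ((∏ i, r i) ^ ((1:ℝ)/n))) := by
        intro i; rw [hall i]
      rw [Finset.prod_congr rfl (fun i _ => this i)]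
      simp
end
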